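/- The cost-splitting dual satisfies the polyhedral characterization: z_CS = min{cx : x ∈ conv{x ∈ Z_+^n : A¹x ≤ b¹} ∩ conv{x ∈ Z_+^n : A²x ≤ b²}}, where z_CS = max_u [ min{(c-u)x¹ : A¹x¹ ≤ b¹, x¹ ∈ Z_+^n} + min{u x² : A²x² ≤ b², x² ∈ Z_+^n} ]. -/

import Mathlib

open Finset

private lemma dotLin {n : ℕ} (u : Fin n → ℝ) :
    IsLinearMap ℝ (fun x : Fin n → ℝ => ∑ j, u j * x j) := by
  constructor
  · intro x y; simp [mul_add, Finset.sum_add_distrib]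
  · intro a x
    simp only [Pi.smul_apply, smul_eq_mul, Finset.mul_sum]
    exact Finset.sum_congr rfl fun j _ => by ring

private lemma repCLM {n : ℕ} (f : (Fin n → ℝ) →L[ℝ] ℝ) (x : Fin n → ℝ) :
    f x = ∑ j, x j * f (fun k => if j = k then 1 else 0) := by
  conv_lhs => rw [pi_eq_sum_univ x, map_sum]
  simp

private lemma setEqImage {α : Type*} (S : Set α) (g : α → ℝ) :
    {w | ∃ x ∈ S, w = g x} = g '' S := by
  ext w; simp [Set.image, eq_comm]

theorem cost_splitting_characterization (nn m1 m2 : ℕ)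
    (c : Fin nn → ℝ) (A1 : Matrix (Fin m1) (Fin nn) ℝ) (b1 : Fin m1 → ℝ)
    (A2 : Matrix (Fin m2) (Fin nn) ℝ) (b2 : Fin m2 → ℝ)
    (S1 : Set (Fin nn → ℕ)) (S2 : Set (Fin nn → ℕ))
    (hS1 : S1 = {x | ∀ i, ∑ j, A1 i j * (x j : ℝ) ≤ b1 i})
    (hS2 : S2 = {x | ∀ i, ∑ j, A2 i j * (x j : ℝ) ≤ b2 i})
    (hS1ne : S1.Nonempty) (hS2ne : S2.Nonempty)
    (hS1fin : S1.Finite) (hS2fin : S2.Finite)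
    (zCS : ℝ)
    (hCS : IsLUB {v | ∃ u : Fin nn → ℝ,
      v = sInf {w | ∃ x1 ∈ S1, w = ∑ j, (c j - u j) * (x1 j : ℝ)} +
          sInf {w | ∃ x2 ∈ S2, w = ∑ j, u j * (x2 j : ℝ)}} zCS) :
    IsLeast {v | ∃ x ∈ convexHull ℝ ((fun (x : Fin nn → ℕ) (j : Fin nn) => (x j : ℝ)) '' S1) ∩
        convexHull ℝ ((fun (x : Fin nn → ℕ) (j : Fin nn) => (x j : ℝ)) '' S2),
      v = ∑ j, c j * x j} zCS := by
  classical
  set cv : (Fin nn → ℕ) → (Fin nn → ℝ) := fun x j => (x j : ℝ) with hcv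
  set P1 := convexHull ℝ (cv '' S1) with hP1
  set P2 := convexHull ℝ (cv '' S2) with hP2
  -- basic facts about P1, P2
  have hT1fin : (cv '' S1).Finite := hS1fin.image _
  have hT2fin : (cv '' S2).Finite := hS2fin.image _
  have hP1cpt : IsCompact P1 := hT1fin.isCompact_convexHull (𝕜 := ℝ)
  have hP2cpt : IsCompact P2 := hT2fin.isCompact_convexHull (𝕜 := ℝ)
  have hP1conv : Convex ℝ P1 := convex_convexHull ℝ _
  have hP2conv : Convex ℝ P2 := convex_convexHull ℝ _
  have hsub1 : ∀ x ∈ S1, cv x ∈ P1 := fun x hx =>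
    subset_convexHull ℝ _ (Set.mem_image_of_mem _ hx)
  have hsub2 : ∀ x ∈ S2, cv x ∈ P2 := fun x hx =>
    subset_convexHull ℝ _ (Set.mem_image_of_mem _ hx)
  -- the inner minimization sets
  set A : (Fin nn → ℝ) → Set ℝ :=
    fun u => {w | ∃ x1 ∈ S1, w = ∑ j, (c j - u j) * (x1 j : ℝ)} with hA
  set B : (Fin nn → ℝ) → Set ℝ :=
    fun u => {w | ∃ x2 ∈ S2, w = ∑ j, u j * (x2 j : ℝ)} with hB
  have hAim : ∀ u : Fin nn → ℝ,
      A u = (fun x1 : Fin nn → ℕ => ∑ j, (c j - u j) * (x1 j : ℝ)) '' S1 :=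
    fun u => setEqImage _ _
  have hBim : ∀ u : Fin nn → ℝ,
      B u = (fun x2 : Fin nn → ℕ => ∑ j, u j * (x2 j : ℝ)) '' S2 :=
    fun u => setEqImage _ _
  have hAfin : ∀ u, (A u).Finite := fun u => (hAim u) ▸ hS1fin.image _
  have hBfin : ∀ u, (B u).Finite := fun u => (hBim u) ▸ hS2fin.image _
  have hAne : ∀ u, (A u).Nonempty := by
    intro u; obtain ⟨x, hx⟩ := hS1ne; exact ⟨_, ⟨x, hx, rfl⟩⟩
  have hBne : ∀ u, (B u).Nonempty := by
    intro u; obtain ⟨x, hx⟩ := hS2ne; exact ⟨_, ⟨x, hx, rfl⟩⟩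
  -- weak duality: any dual value is ≤ c·x for x ∈ P1 ∩ P2
  have weak : ∀ x ∈ P1 ∩ P2, ∀ u : Fin nn → ℝ,
      sInf (A u) + sInf (B u) ≤ ∑ j, c j * x j := by
    intro x hx u
    have h1 : sInf (A u) ≤ ∑ j, (c j - u j) * x j := by
      have hsubset : P1 ⊆ {z : Fin nn → ℝ | sInf (A u) ≤ ∑ j, (c j - u j) * z j} := by
        apply convexHull_min _ (convex_halfSpace_ge (dotLin _) _)
        rintro z ⟨x1, hx1, rfl⟩
        exact csInf_le (hAfin u).bddBelow ⟨x1, hx1, rfl⟩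
      exact hsubset hx.1
    have h2 : sInf (B u) ≤ ∑ j, u j * x j := by
      have hsubset : P2 ⊆ {z : Fin nn → ℝ | sInf (B u) ≤ ∑ j, u j * z j} := by
        apply convexHull_min _ (convex_halfSpace_ge (dotLin _) _)
        rintro z ⟨x2, hx2, rfl⟩
        exact csInf_le (hBfin u).bddBelow ⟨x2, hx2, rfl⟩
      exact hsubset hx.2
    have h3 : (∑ j, (c j - u j) * x j) + ∑ j, u j * x j = ∑ j, c j * x j := by
      rw [← Finset.sum_add_distrib]
      exact Finset.sum_congr rfl fun j _ => by ring
    linarith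
  -- dual values are at most zCS
  have hmem : ∀ u : Fin nn → ℝ, sInf (A u) + sInf (B u) ≤ zCS := fun u => hCS.1 ⟨u, rfl⟩
  -- dual value expressed via minimizers
  have hminzer : ∀ u : Fin nn → ℝ, ∃ x1 ∈ S1, ∃ x2 ∈ S2,
      sInf (A u) + sInf (B u) =
        (∑ j, (c j - u j) * (x1 j : ℝ)) + ∑ j, u j * (x2 j : ℝ) := by
    intro u
    obtain ⟨x1, hx1, he1⟩ := (hAne u).csInf_mem (hAfin u)
    obtain ⟨x2, hx2, he2⟩ := (hBne u).csInf_mem (hBfin u)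
    exact ⟨x1, hx1, x2, hx2, by rw [he1, he2]⟩
  -- Step 1 : P1 ∩ P2 is nonempty
  have hKne : (P1 ∩ P2).Nonempty := by
    by_contra hemp
    rw [Set.not_nonempty_iff_eq_empty] at hemp
    set L : ((Fin nn → ℝ) × (Fin nn → ℝ)) →ₗ[ℝ] (Fin nn → ℝ) :=
      LinearMap.snd ℝ (Fin nn → ℝ) (Fin nn → ℝ) - LinearMap.fst ℝ _ _ with hL
    set D0 : Set (Fin nn → ℝ) := L '' (P1 ×ˢ P2) with hD0
    have hD0conv : Convex ℝ D0 := (hP1conv.prod hP2conv).linear_image L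
    have hD0cl : IsClosed D0 :=
      (((hP1cpt.prod hP2cpt).image L.continuous_of_finiteDimensional)).isClosed
    have h0 : (0 : Fin nn → ℝ) ∉ D0 := by
      rintro ⟨⟨x, y⟩, ⟨hx, hy⟩, hxy⟩
      have hyx : y = x := sub_eq_zero.mp hxy
      subst hyx
      exact Set.eq_empty_iff_forall_notMem.mp hemp y ⟨hx, hy⟩
    obtain ⟨f, γ, hfa, hγ⟩ := geometric_hahn_banach_closed_point hD0conv hD0cl h0
    have hγ0 : γ < 0 := by simpa using hγ
    set g : Fin nn → ℝ := fun j => f (fun k => if j = k then 1 else 0) with hg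
    have hfd : ∀ x1 ∈ S1, ∀ x2 ∈ S2, ∑ j, ((x2 j : ℝ) - (x1 j : ℝ)) * g j < γ := by
      intro x1 h1 x2 h2
      have hm : f (cv x2 - cv x1) < γ :=
        hfa _ ⟨(cv x1, cv x2), ⟨hsub1 _ h1, hsub2 _ h2⟩, rfl⟩
      rw [repCLM f (cv x2 - cv x1)] at hm
      simpa [hcv, hg] using hm
    set m := sInf ((fun x1 : Fin nn → ℕ => ∑ j, c j * (x1 j : ℝ)) '' S1) with hm
    have hmle : ∀ x1 ∈ S1, m ≤ ∑ j, c j * (x1 j : ℝ) := fun x1 h1 =>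
      csInf_le (hS1fin.image _).bddBelow ⟨x1, h1, rfl⟩
    have hlarge : ∀ t : ℝ, 0 < t → m + t * (-γ) ≤ zCS := by
      intro t ht
      set u : Fin nn → ℝ := fun j => -t * g j with hu
      obtain ⟨x1, h1, x2, h2, hv⟩ := hminzer u
      have hval : (∑ j, (c j - u j) * (x1 j : ℝ)) + ∑ j, u j * (x2 j : ℝ)
          = (∑ j, c j * (x1 j : ℝ)) + (-t) * ∑ j, ((x2 j : ℝ) - (x1 j : ℝ)) * g j := by
        rw [Finset.mul_sum, ← Finset.sum_add_distrib, ← Finset.sum_add_distrib]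
        exact Finset.sum_congr rfl fun j _ => by simp only [hu]; ring
      have hd := hfd x1 h1 x2 h2
      have hle : m + t * (-γ) ≤ sInf (A u) + sInf (B u) := by
        rw [hv, hval]
        have := hmle x1 h1
        nlinarith
      exact hle.trans (hmem u)
    have h1 := hlarge 1 one_pos
    have hpos : 0 < zCS - m + 1 := by linarith
    have ht : 0 < (zCS - m + 1) / (-γ) := div_pos hpos (by linarith)
    have h2 := hlarge _ ht
    rw [div_mul_cancel₀ _ (by linarith : (-γ) ≠ 0)] at h2
    linarith
  -- Step 2: the minimum μ over P1 ∩ P2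
  have hcont : Continuous (fun x : Fin nn → ℝ => ∑ j, c j * x j) :=
    continuous_finset_sum _ fun j _ => continuous_const.mul (continuous_apply j)
  obtain ⟨xs, hxs, hmin⟩ :=
    (hP1cpt.inter_right hP2cpt.isClosed).exists_isMinOn hKne hcont.continuousOn
  set μ := ∑ j, c j * xs j with hμ
  have hzle : zCS ≤ μ := hCS.2 fun v hv => by
    obtain ⟨u, hvu⟩ := hv
    rw [hvu]; exact weak xs hxs u
  have hzge : ¬ zCS < μ := by
    intro hlt
    set Φ : ((Fin nn → ℝ) × (Fin nn → ℝ)) →ₗ[ℝ] ((Fin nn → ℝ) × ℝ) :=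
      (LinearMap.snd ℝ (Fin nn → ℝ) (Fin nn → ℝ) - LinearMap.fst ℝ _ _).prod
        ((IsLinearMap.mk' _ (dotLin c)).comp (LinearMap.fst ℝ _ _)) with hΦ
    set Bs : Set ((Fin nn → ℝ) × ℝ) := Φ '' (P1 ×ˢ P2) with hBs
    have hBconv : Convex ℝ Bs := (hP1conv.prod hP2conv).linear_image Φ
    have hBcl : IsClosed Bs :=
      ((hP1cpt.prod hP2cpt).image Φ.continuous_of_finiteDimensional).isClosed
    have hpnot : ((0 : Fin nn → ℝ), zCS) ∉ Bs := by
      rintro ⟨⟨x, y⟩, ⟨hx, hy⟩, hxy⟩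
      have hyx : y - x = 0 := congrArg Prod.fst hxy
      have hcx : (∑ j, c j * x j) = zCS := congrArg Prod.snd hxy
      have hyx' : y = x := sub_eq_zero.mp hyx
      subst hyx'
      have hge : μ ≤ ∑ j, c j * y j := hmin (⟨hx, hy⟩ : y ∈ P1 ∩ P2)
      rw [hcx] at hge
      exact absurd hlt (not_lt.mpr hge)
    obtain ⟨f, γ, hfp, hfB⟩ := geometric_hahn_banach_point_closed hBconv hBcl hpnot
    set α : ℝ := f ((0 : Fin nn → ℝ), 1) with hα
    set g : Fin nn → ℝ := fun j => f ((fun k => if j = k then 1 else 0 : Fin nn → ℝ), 0) with hg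
    have fdec : ∀ (d : Fin nn → ℝ) (t : ℝ), f (d, t) = (∑ j, d j * g j) + t * α := by
      intro d t
      have hsplit : ((d, t) : (Fin nn → ℝ) × ℝ) = (d, 0) + t • ((0 : Fin nn → ℝ), 1) := by
        simp [Prod.ext_iff]
      rw [hsplit, map_add, map_smul]
      have hrep : f (d, 0) = ∑ j, d j * g j := by
        have := repCLM (f.comp (ContinuousLinearMap.inl ℝ (Fin nn → ℝ) ℝ)) d
        simpa [hg] using this
      rw [hrep]; simp [hα, smul_eq_mul]
    have hmu0 : ((0 : Fin nn → ℝ), μ) ∈ Bs := by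
      refine ⟨(xs, xs), ⟨hxs.1, hxs.2⟩, ?_⟩
      simp [hΦ, hμ, Prod.ext_iff]
    have hfmu : γ < f ((0 : Fin nn → ℝ), μ) := hfB _ hmu0
    have hfmu' : f ((0 : Fin nn → ℝ), μ) = μ * α := by
      rw [fdec]; simp
    have hfp' : f ((0 : Fin nn → ℝ), zCS) = zCS * α := by
      rw [fdec]; simp
    have hαpos : 0 < α := by
      rw [hfmu'] at hfmu; rw [hfp'] at hfp
      nlinarith
    set u : Fin nn → ℝ := fun j => g j / α with hu
    have key : ∀ x1 ∈ S1, ∀ x2 ∈ S2,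
        γ / α < (∑ j, (c j - u j) * (x1 j : ℝ)) + ∑ j, u j * (x2 j : ℝ) := by
      intro x1 h1 x2 h2
      have hbB : γ < f (cv x2 - cv x1, ∑ j, c j * cv x1 j) :=
        hfB _ ⟨(cv x1, cv x2), ⟨hsub1 _ h1, hsub2 _ h2⟩, rfl⟩
      rw [fdec] at hbB
      simp only [hcv, Pi.sub_apply] at hbB
      rw [div_lt_iff₀ hαpos]
      have hval : ((∑ j, (c j - u j) * (x1 j : ℝ)) + ∑ j, u j * (x2 j : ℝ)) * α
          = (∑ j, ((x2 j : ℝ) - (x1 j : ℝ)) * g j) + (∑ j, c j * (x1 j : ℝ)) * α := by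
        rw [add_mul, Finset.sum_mul, Finset.sum_mul, Finset.sum_mul,
          ← Finset.sum_add_distrib, ← Finset.sum_add_distrib]
        refine Finset.sum_congr rfl fun j _ => ?_
        simp only [hu]
        field_simp
        ring
      rw [hval]
      exact hbB
    obtain ⟨x1, h1, x2, h2, hv⟩ := hminzer u
    have h3 : γ / α < sInf (A u) + sInf (B u) := by
      rw [hv]; exact key x1 h1 x2 h2
    have h4 : zCS < γ / α := by
      rw [hfp'] at hfp
      rw [lt_div_iff₀ hαpos]
      exact hfp
    exact absurd (hmem u) (not_le.mpr (h4.trans h3))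
  have hz : zCS = μ := le_antisymm hzle (not_lt.mp hzge)
  constructor
  · exact ⟨xs, hxs, hz.trans hμ⟩
  · rintro v ⟨x, hx, rfl⟩
    refine hCS.2 fun w hw => ?_
    obtain ⟨u, hwu⟩ := hw
    rw [hwu]; exact weak x hx u
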